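/- Let (G,c) be an n-vertex edge-colored graph with δ^c(G) ≥ (n+1)/2. Then G contains a rainbow triangle, i.e., three vertices x, y, z pairwise adjacent with c({x,y}), c({y,z}), c({x,z}) pairwise distinct. -/
import Mathlib


open Finset

variable {V : Type*}

/-- Number of distinct colors on edges incident to `v`. -/
noncomputable def colorDeg (G : SimpleGraph V) (c : Sym2 V → ℕ) (v : V) : ℕ :=
  Set.ncard {α : ℕ | ∃ u, G.Adj u v ∧ c s(u, v) = α}

/-- Number of distinct colors `c({u,v})` over `u ∈ N(v) ∩ U`. -/
noncomputable def colorDegOn (G : SimpleGraph V) (c : Sym2 V → ℕ) (v : V) (U : Set V) : ℕ :=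
  Set.ncard {α : ℕ | ∃ u ∈ U, G.Adj u v ∧ c s(u, v) = α}

/-- Minimum color-degree `δ^c(G)`. -/
noncomputable def minColorDeg (G : SimpleGraph V) (c : Sym2 V → ℕ) : ℕ :=
  ⨅ v : V, colorDeg G c v

/-- `(G,c)` is edge-minimal: no proper spanning subgraph has the same minimum color-degree. -/
def EdgeMinimal (G : SimpleGraph V) (c : Sym2 V → ℕ) : Prop :=
  ∀ H : SimpleGraph V, H ≤ G → H ≠ G → minColorDeg H c ≠ minColorDeg G c

/-- `(G,c)` contains a rainbow cycle on `ℓ` vertices. -/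
def HasRainbowCycle (G : SimpleGraph V) (c : Sym2 V → ℕ) (ℓ : ℕ) : Prop :=
  ∃ (u : V) (p : G.Walk u u), p.IsCycle ∧ p.length = ℓ ∧ (p.edges.map c).Nodup

/-- There is a rainbow path from `v` to `y` on `k` vertices whose edge colors avoid `C`. -/
def RainbowPathAvoiding (G : SimpleGraph V) (c : Sym2 V → ℕ) (v y : V) (k : ℕ)
    (C : Set ℕ) : Prop :=
  ∃ p : G.Walk v y, p.IsPath ∧ p.length + 1 = k ∧ (p.edges.map c).Nodup ∧
    ∀ e ∈ p.edges, c e ∉ C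

/-- `σ_{v,X}(y)`: the number of colors `X`-separating `y` from `v`. -/
noncomputable def sepCount (G : SimpleGraph V) (c : Sym2 V → ℕ) (v : V) (X : Set V)
    (y : V) : ℕ :=
  Set.ncard {α : ℕ | ∃ x ∈ X, G.Adj x y ∧ c s(x, y) = α ∧ c s(v, x) ≠ α}

/-- `ρ_{v,X}(y)`: the number of colors restricted for `y` by `(v,X)`. -/
noncomputable def restrCount (G : SimpleGraph V) (c : Sym2 V → ℕ) (v : V) (X : Set V)
    (y : V) : ℕ :=
  Set.ncard {α : ℕ | (∃ x ∈ X, G.Adj x y ∧ c s(x, y) = α ∧ c s(v, x) ≠ α) ∧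
    ∀ w, G.Adj w y → w ∉ X → c s(w, y) ≠ α}

/-- The replication number `R(G,c) = max_{v,α} |N_α(v)|`. -/
noncomputable def repNum (G : SimpleGraph V) (c : Sym2 V → ℕ) : ℕ :=
  ⨆ v : V, ⨆ α : ℕ, Set.ncard {u : V | G.Adj u v ∧ c s(u, v) = α}

/-- `N_!(v)`: neighbors `u` of `v` whose color `c({u,v})` appears on exactly one edge at `v`. -/
def bangNbhd (G : SimpleGraph V) (c : Sym2 V → ℕ) (v : V) : Set V :=
  {u : V | G.Adj u v ∧ Set.ncard {w : V | G.Adj w v ∧ c s(w, v) = c s(u, v)} = 1}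

/-! ### Auxiliary development for `stmt2`

We prove Li's theorem via the following route (essentially the Li–Ning–Xu
counting argument): in any rainbow-triangle-free edge-colored graph, a vertex
`z` of minimum degree satisfies `d^c(z) + |B(z)| ≤ n`, where `B(z)` is the set
of neighbors `v` of `z` for which the color `c(zv)` appears on exactly one edge
at `v`.  Deleting such a `z` decreases each remaining color-degree by at most
one (and only for vertices in `B(z)`), which yields by induction
`2 · Σ_v d^c(v) + 2 ≤ n(n+1)` for every rainbow-triangle-free coloring.
The hypothesis `δ^c ≥ (n+1)/2` forces `2 · Σ_v d^c(v) ≥ n(n+1)`, a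
contradiction. -/

open scoped Classical

/-- Neighbors of `v` inside `S`. -/
noncomputable def nbF (G : SimpleGraph V) (S : Finset V) (v : V) : Finset V :=
  S.filter (fun u => G.Adj u v)

/-- Palette of colors at `v` from edges into `S`. -/
noncomputable def palF (G : SimpleGraph V) (c : Sym2 V → ℕ) (S : Finset V) (v : V) : Finset ℕ :=
  (nbF G S v).image (fun u => c s(u, v))

/-- Color degree of `v` relative to `S`. -/
noncomputable def dcF (G : SimpleGraph V) (c : Sym2 V → ℕ) (S : Finset V) (v : V) : ℕ :=
  (palF G c S v).card

/-- Multiplicity of color `γ` at `v` relative to `S`. -/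
noncomputable def multF (G : SimpleGraph V) (c : Sym2 V → ℕ) (S : Finset V) (v : V) (γ : ℕ) : ℕ :=
  ((nbF G S v).filter (fun u => c s(u, v) = γ)).card

/-- Neighbors `v` of `z` in `S` such that the color of `zv` appears exactly once at `v`. -/
noncomputable def BF (G : SimpleGraph V) (c : Sym2 V → ℕ) (S : Finset V) (z : V) : Finset V :=
  (nbF G S z).filter (fun v => multF G c S v (c s(z, v)) = 1)

/-- No rainbow triangle (disjunctive form). -/
def NoRainbow (G : SimpleGraph V) (c : Sym2 V → ℕ) : Prop :=
  ∀ x y w, G.Adj x y → G.Adj y w → G.Adj x w →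
    c s(x, y) = c s(y, w) ∨ c s(y, w) = c s(x, w) ∨ c s(x, y) = c s(x, w)

lemma mem_nbF {G : SimpleGraph V} {S : Finset V} {v u : V} :
    u ∈ nbF G S v ↔ u ∈ S ∧ G.Adj u v := by
  simp [nbF]

lemma mem_BF {G : SimpleGraph V} {c : Sym2 V → ℕ} {S : Finset V} {z v : V} :
    v ∈ BF G c S z ↔ (v ∈ S ∧ G.Adj v z) ∧ multF G c S v (c s(z, v)) = 1 := by
  simp [BF, mem_nbF]

lemma nbF_subset {G : SimpleGraph V} {S : Finset V} {v : V} : nbF G S v ⊆ S :=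
  Finset.filter_subset _ _

lemma BF_subset {G : SimpleGraph V} {c : Sym2 V → ℕ} {S : Finset V} {z : V} :
    BF G c S z ⊆ nbF G S z := Finset.filter_subset _ _

lemma BF_subset_erase {G : SimpleGraph V} {c : Sym2 V → ℕ} {S : Finset V} {z : V} :
    BF G c S z ⊆ S.erase z := by
  intro v hv
  obtain ⟨⟨hvS, hvz⟩, _⟩ := mem_BF.mp hv
  exact Finset.mem_erase.mpr ⟨hvz.ne, hvS⟩

/-- Two members of `BF S z` that are adjacent must get the same color from `z`. -/
lemma class_eq {G : SimpleGraph V} {c : Sym2 V → ℕ} (hyp : NoRainbow G c)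
    {S : Finset V} {z u w : V} (hz : z ∈ S)
    (hu : u ∈ BF G c S z) (hw : w ∈ BF G c S z) (huw : G.Adj u w) :
    c s(u, z) = c s(w, z) := by
  obtain ⟨⟨huS, huz⟩, humult⟩ := mem_BF.mp hu
  obtain ⟨⟨hwS, hwz⟩, hwmult⟩ := mem_BF.mp hw
  rcases hyp u z w huz hwz.symm huw with h1 | h2 | h3
  · rw [h1, Sym2.eq_swap]
  · -- c s(z,w) = c s(u,w) contradicts uniqueness at w
    exfalso
    have hzmem : z ∈ (nbF G S w).filter (fun x => c s(x, w) = c s(z, w)) := by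
      simp [mem_nbF, hz, hwz.symm]
    have humem : u ∈ (nbF G S w).filter (fun x => c s(x, w) = c s(z, w)) := by
      simp [mem_nbF, huS, huw, h2.symm]
    have h2card : 1 < ((nbF G S w).filter (fun x => c s(x, w) = c s(z, w))).card := by
      apply Finset.one_lt_card.mpr
      exact ⟨z, hzmem, u, humem, (huz.ne).symm⟩
    rw [multF] at hwmult
    omega
  · -- c s(u,z) = c s(u,w) contradicts uniqueness at u
    exfalso
    have hzmem : z ∈ (nbF G S u).filter (fun x => c s(x, u) = c s(z, u)) := by
      simp [mem_nbF, hz, huz.symm]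
    have hwmem : w ∈ (nbF G S u).filter (fun x => c s(x, u) = c s(z, u)) := by
      have : c s(w, u) = c s(z, u) := by
        rw [Sym2.eq_swap, ← h3, Sym2.eq_swap]
      simp [mem_nbF, hwS, huw.symm, this]
    have h2card : 1 < ((nbF G S u).filter (fun x => c s(x, u) = c s(z, u))).card := by
      apply Finset.one_lt_card.mpr
      exact ⟨z, hzmem, w, hwmem, (hwz.ne).symm⟩
    rw [multF] at humult
    omega

/-- The key lemma: a vertex of minimum degree `z` in `S` satisfies
`dcF z + |BF z| ≤ |S|` when there is no rainbow triangle. -/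
lemma key_lemma {G : SimpleGraph V} {c : Sym2 V → ℕ} (hyp : NoRainbow G c)
    {S : Finset V} {z : V} (hz : z ∈ S)
    (hmin : ∀ y ∈ S, (nbF G S z).card ≤ (nbF G S y).card) :
    dcF G c S z + (BF G c S z).card ≤ S.card := by
  by_contra hcon
  push_neg at hcon
  set n := S.card with hn
  set D := (nbF G S z).card with hD
  set b := (BF G c S z).card with hb
  set dc := dcF G c S z with hdc
  set f : V → ℕ := fun v => c s(v, z) with hf
  set im := (BF G c S z).image f with him
  set m := im.card with hm
  have hmb : m ≤ b := Finset.card_image_le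
  have hbD : b ≤ D := Finset.card_le_card BF_subset
  have hDn : D + 1 ≤ n := by
    have hsub : nbF G S z ⊆ S.erase z := by
      intro u hu
      obtain ⟨huS, huz⟩ := mem_nbF.mp hu
      exact Finset.mem_erase.mpr ⟨huz.ne, huS⟩
    have := Finset.card_le_card hsub
    rw [Finset.card_erase_of_mem hz] at this
    have hn1 : 1 ≤ n := Finset.card_pos.mpr ⟨z, hz⟩
    omega
  have hii : dc + b ≤ m + D := by
    have huni : BF G c S z ∪ (nbF G S z \ BF G c S z) = nbF G S z :=
      Finset.union_sdiff_of_subset BF_subset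
    have hpal : palF G c S z = im ∪ ((nbF G S z \ BF G c S z).image f) := by
      rw [him, ← Finset.image_union, huni]
      rfl
    have h1 : dc ≤ m + (nbF G S z \ BF G c S z).card := by
      rw [hdc, dcF, hpal]
      calc (im ∪ ((nbF G S z \ BF G c S z).image f)).card
          ≤ im.card + ((nbF G S z \ BF G c S z).image f).card := Finset.card_union_le _ _
        _ ≤ m + (nbF G S z \ BF G c S z).card := by
            exact Nat.add_le_add le_rfl Finset.card_image_le
    have h2 : (nbF G S z \ BF G c S z).card = D - b := Finset.card_sdiff_of_subset BF_subset
    omega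
  have hiii : ∀ γ ∈ im, b + D + 1 ≤ n + ((BF G c S z).filter (fun v => f v = γ)).card := by
    intro γ hγ
    obtain ⟨u, huB, hufc⟩ := Finset.mem_image.mp hγ
    set P := (BF G c S z).filter (fun v => f v = γ) with hP
    have hPsub : P ⊆ BF G c S z := Finset.filter_subset _ _
    have huP : u ∈ P := Finset.mem_filter.mpr ⟨huB, hufc⟩
    have huS : u ∈ S := nbF_subset (BF_subset huB)
    have hnon : Disjoint (nbF G S u) (insert u (BF G c S z \ P)) := by
      rw [Finset.disjoint_insert_right]
      constructor
      · intro hmem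
        exact (G.irrefl (mem_nbF.mp hmem).2)
      · rw [Finset.disjoint_left]
        intro x hx hx'
        obtain ⟨hxB, hxP⟩ := Finset.mem_sdiff.mp hx'
        have hadj : G.Adj u x := ((mem_nbF.mp hx).2).symm
        have := class_eq hyp hz huB hxB hadj
        apply hxP
        refine Finset.mem_filter.mpr ⟨hxB, ?_⟩
        rw [hf]
        simp only []
        rw [← this]
        exact hufc
    have hsub2 : nbF G S u ∪ insert u (BF G c S z \ P) ⊆ S := by
      apply Finset.union_subset nbF_subset
      apply Finset.insert_subset huS
      exact (Finset.sdiff_subset).trans (BF_subset.trans nbF_subset)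
    have hcards : (nbF G S u).card + (insert u (BF G c S z \ P)).card ≤ n := by
      rw [← Finset.card_union_of_disjoint hnon]
      exact Finset.card_le_card hsub2
    have hins : (insert u (BF G c S z \ P)).card = (BF G c S z \ P).card + 1 := by
      rw [Finset.card_insert_of_notMem]
      intro hmem
      exact (Finset.mem_sdiff.mp hmem).2 huP
    have hsd : (BF G c S z \ P).card = b - P.card := Finset.card_sdiff_of_subset hPsub
    have hPb : P.card ≤ b := Finset.card_le_card hPsub
    have hdu : D ≤ (nbF G S u).card := hmin u huS
    omega
  have hiv : b = ∑ γ ∈ im, ((BF G c S z).filter (fun v => f v = γ)).card := by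
    rw [hb, him]
    exact Finset.card_eq_sum_card_image f _
  have hi : n + 1 ≤ dc + b := hcon
  have hm2 : 2 ≤ m := by omega
  have hvii : m * (b + 2) ≤ b + m * m := by
    have hstep : ∀ γ ∈ im, b + 2 ≤ ((BF G c S z).filter (fun v => f v = γ)).card + m := by
      intro γ hγ
      have := hiii γ hγ
      omega
    calc m * (b + 2) = ∑ _γ ∈ im, (b + 2) := by rw [Finset.sum_const, smul_eq_mul, ← hm, mul_comm]
      _ ≤ ∑ γ ∈ im, (((BF G c S z).filter (fun v => f v = γ)).card + m) :=
          Finset.sum_le_sum hstep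
      _ = b + m * m := by
          rw [Finset.sum_add_distrib, ← hiv, Finset.sum_const, smul_eq_mul, ← hm, mul_comm]
  have hZ : (m : ℤ) * (b + 2) ≤ b + m * m := by exact_mod_cast hvii
  have hmb' : (m : ℤ) ≤ b := by exact_mod_cast hmb
  have hm2' : (2 : ℤ) ≤ m := by exact_mod_cast hm2
  nlinarith [mul_nonneg (by linarith : (0:ℤ) ≤ (m:ℤ) - 1) (by linarith : (0:ℤ) ≤ (b:ℤ) - m)]

/-- Deleting `z` decreases the color degree of `v` by at most `1`,
and doesn't decrease it at all unless `v ∈ BF S z`. -/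
lemma del_lemma {G : SimpleGraph V} {c : Sym2 V → ℕ} {S : Finset V} {z v : V}
    (hz : z ∈ S) (hv : v ∈ S.erase z) :
    dcF G c S v ≤ dcF G c (S.erase z) v + (if v ∈ BF G c S z then 1 else 0) := by
  obtain ⟨hvz, hvS⟩ := Finset.mem_erase.mp hv
  by_cases hB : v ∈ BF G c S z
  · rw [if_pos hB]
    have hsub : palF G c S v ⊆ insert (c s(z, v)) (palF G c (S.erase z) v) := by
      intro γ hγ
      obtain ⟨u, hu, rfl⟩ := Finset.mem_image.mp hγ
      obtain ⟨huS, huv⟩ := mem_nbF.mp hu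
      by_cases huz : u = z
      · subst huz; exact Finset.mem_insert_self _ _
      · apply Finset.mem_insert_of_mem
        exact Finset.mem_image.mpr ⟨u, mem_nbF.mpr ⟨Finset.mem_erase.mpr ⟨huz, huS⟩, huv⟩, rfl⟩
    calc dcF G c S v ≤ (insert (c s(z, v)) (palF G c (S.erase z) v)).card :=
          Finset.card_le_card hsub
      _ ≤ dcF G c (S.erase z) v + 1 := Finset.card_insert_le _ _
  · rw [if_neg hB, Nat.add_zero]
    have hsub : palF G c S v ⊆ palF G c (S.erase z) v := by
      intro γ hγ
      obtain ⟨u, hu, rfl⟩ := Finset.mem_image.mp hγ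
      obtain ⟨huS, huv⟩ := mem_nbF.mp hu
      by_cases huz : u = z
      · subst huz
        have hmult : multF G c S v (c s(u, v)) ≠ 1 := by
          intro h1
          exact hB (mem_BF.mpr ⟨⟨hvS, huv.symm⟩, h1⟩)
        have hmem : u ∈ (nbF G S v).filter (fun x => c s(x, v) = c s(u, v)) := by
          simp [mem_nbF, huS, huv]
        have hpos : 1 ≤ multF G c S v (c s(u, v)) :=
          Finset.card_pos.mpr ⟨u, hmem⟩
        have hlt : 1 < ((nbF G S v).filter (fun x => c s(x, v) = c s(u, v))).card := by
          rw [multF] at hmult hpos; omega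
        obtain ⟨u', hu'mem, hu'ne⟩ := Finset.exists_mem_ne hlt u
        obtain ⟨hu'nb, hu'col⟩ := Finset.mem_filter.mp hu'mem
        obtain ⟨hu'S, hu'v⟩ := mem_nbF.mp hu'nb
        exact Finset.mem_image.mpr
          ⟨u', mem_nbF.mpr ⟨Finset.mem_erase.mpr ⟨hu'ne, hu'S⟩, hu'v⟩, hu'col⟩
      · exact Finset.mem_image.mpr ⟨u, mem_nbF.mpr ⟨Finset.mem_erase.mpr ⟨huz, huS⟩, huv⟩, rfl⟩
    exact Finset.card_le_card hsub

/-- Main counting theorem: in a rainbow-triangle-free coloring,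
`2 Σ_{v ∈ S} d^c_S(v) + 2 ≤ |S| (|S|+1)` for every nonempty `S`. -/
theorem sum_bound (G : SimpleGraph V) (c : Sym2 V → ℕ) (hyp : NoRainbow G c)
    (S : Finset V) : S.Nonempty →
    2 * (∑ v ∈ S, dcF G c S v) + 2 ≤ S.card * (S.card + 1) := by
  induction S using Finset.strongInduction with
  | _ S IH =>
    intro hS
    by_cases hn1 : S.card = 1
    · obtain ⟨z, rfl⟩ := Finset.card_eq_one.mp hn1
      have hnb : nbF G {z} z = ∅ := by
        apply Finset.eq_empty_of_forall_notMem
        intro x hx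
        obtain ⟨hx1, hx2⟩ := Finset.mem_filter.mp hx
        rw [Finset.mem_singleton] at hx1
        subst hx1
        exact G.irrefl hx2
      have : dcF G c {z} z = 0 := by
        rw [dcF, palF, hnb]; simp
      rw [Finset.sum_singleton, this, Finset.card_singleton]
    · have hn2 : 2 ≤ S.card := by
        have := Finset.card_pos.mpr hS
        omega
      obtain ⟨z, hzS, hzmin⟩ := S.exists_min_image (fun y => (nbF G S y).card) hS
      set S' := S.erase z with hS'
      have hcard' : S'.card + 1 = S.card := by
        rw [hS', Finset.card_erase_of_mem hzS]
        omega
      have hS'ne : S'.Nonempty := by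
        rw [← Finset.card_pos]
        omega
      have hIH := IH S' (Finset.erase_ssubset hzS) hS'ne
      have hkey := key_lemma hyp hzS hzmin
      have hstep : ∑ v ∈ S', dcF G c S v ≤
          (∑ v ∈ S', dcF G c S' v) + (BF G c S z).card := by
        calc ∑ v ∈ S', dcF G c S v
            ≤ ∑ v ∈ S', (dcF G c S' v + (if v ∈ BF G c S z then 1 else 0)) := by
              apply Finset.sum_le_sum
              intro v hv
              exact del_lemma hzS hv
          _ = (∑ v ∈ S', dcF G c S' v) + ∑ v ∈ S', (if v ∈ BF G c S z then 1 else 0) := by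
              rw [Finset.sum_add_distrib]
          _ = (∑ v ∈ S', dcF G c S' v) + (BF G c S z).card := by
              congr 1
              rw [Finset.sum_ite_mem]
              have : S' ∩ BF G c S z = BF G c S z :=
                Finset.inter_eq_right.mpr BF_subset_erase
              rw [this, Finset.sum_const, smul_eq_mul, mul_one]
      have hsplit : ∑ v ∈ S, dcF G c S v = dcF G c S z + ∑ v ∈ S', dcF G c S v := by
        rw [hS', Finset.add_sum_erase _ _ hzS]
      set X := ∑ v ∈ S, dcF G c S v
      set Y := ∑ v ∈ S', dcF G c S' v
      set k := S'.card
      have hXk : X ≤ S.card + Y := by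
        have : X ≤ dcF G c S z + (Y + (BF G c S z).card) := by
          rw [hsplit]; exact Nat.add_le_add le_rfl hstep
        omega
      have h3 : S.card = k + 1 := hcard'.symm
      rw [h3]
      calc 2 * X + 2 ≤ 2 * (k + 1) + (2 * Y + 2) := by omega
        _ ≤ 2 * (k + 1) + k * (k + 1) := by omega
        _ = (k + 1) * (k + 2) := by ring

lemma colorDeg_eq_dcF [Fintype V] (G : SimpleGraph V) (c : Sym2 V → ℕ) (v : V) :
    colorDeg G c v = dcF G c Finset.univ v := by
  rw [colorDeg, dcF, ← Set.ncard_coe_finset]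
  congr 1
  ext α
  simp [palF, nbF]

theorem stmt2 [Fintype V] (G : SimpleGraph V) (c : Sym2 V → ℕ)
    (hδ : ((Fintype.card V : ℚ) + 1) / 2 ≤ (minColorDeg G c : ℚ)) :
    ∃ x y z : V, G.Adj x y ∧ G.Adj y z ∧ G.Adj x z ∧
      c s(x, y) ≠ c s(y, z) ∧ c s(y, z) ≠ c s(x, z) ∧ c s(x, y) ≠ c s(x, z) := by
  by_contra hcon
  push_neg at hcon
  have hyp : NoRainbow G c := by
    intro x y w hxy hyw hxw
    by_cases h1 : c s(x, y) = c s(y, w)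
    · exact Or.inl h1
    by_cases h2 : c s(y, w) = c s(x, w)
    · exact Or.inr (Or.inl h2)
    · exact Or.inr (Or.inr (hcon x y w hxy hyw hxw h1 h2))
  cases isEmpty_or_nonempty V with
  | inl hempty =>
    have h0 : Fintype.card V = 0 := Fintype.card_eq_zero
    have hm : minColorDeg G c = 0 := by
      rw [minColorDeg, iInf, Set.range_eq_empty, Nat.sInf_empty]
    rw [h0, hm] at hδ
    norm_num at hδ
  | inr hne =>
    have hv : ∀ v : V, Fintype.card V + 1 ≤ 2 * colorDeg G c v := by
      intro v
      have h1 : minColorDeg G c ≤ colorDeg G c v := by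
        rw [minColorDeg]
        exact Nat.sInf_le ⟨v, rfl⟩
      have h2 : ((Fintype.card V : ℚ) + 1) / 2 ≤ (colorDeg G c v : ℚ) := by
        refine le_trans hδ ?_
        exact_mod_cast h1
      have h3 : ((Fintype.card V : ℚ) + 1) ≤ 2 * (colorDeg G c v : ℚ) := by
        rw [div_le_iff₀ (by norm_num : (0:ℚ) < 2)] at h2
        linarith
      exact_mod_cast h3
    have hsum := sum_bound G c hyp Finset.univ (Finset.univ_nonempty (α := V))
    have hlow : (Finset.univ : Finset V).card * ((Finset.univ : Finset V).card + 1) ≤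
        2 * ∑ v ∈ (Finset.univ : Finset V), dcF G c Finset.univ v := by
      calc (Finset.univ : Finset V).card * ((Finset.univ : Finset V).card + 1)
          = ∑ _v : V, (Fintype.card V + 1) := by
            rw [Finset.sum_const, smul_eq_mul, Finset.card_univ]
        _ ≤ ∑ v : V, 2 * colorDeg G c v := Finset.sum_le_sum (fun v _ => hv v)
        _ = 2 * ∑ v ∈ (Finset.univ : Finset V), dcF G c Finset.univ v := by
            rw [Finset.mul_sum]
            exact Finset.sum_congr rfl (fun v _ => by rw [colorDeg_eq_dcF])
    omega
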